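/- If f̂(λ) = Σ_{k=0}^{K-1} a_k u_k^λ with nonzero a_k and distinct nonzero u_k, then for any L ≥ K, the (L+1)×(L+1) Toeplitz matrix T with T_{p,q} = f̂(p-q) has rank exactly K. -/

import Mathlib

open Complex Matrix

/-- Any (L+1)×(L+1) Toeplitz matrix built from a K-term exponential sum, with L ≥ K,
has rank exactly K. -/
theorem stmt15 (K L : ℕ) (hK : 1 ≤ K) (hL : K ≤ L)
    (u : Fin K → ℂ) (hu : ∀ k, u k ≠ 0) (hdist : Function.Injective u)
    (a : Fin K → ℂ) (ha : ∀ k, a k ≠ 0)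
    (T : Matrix (Fin (L + 1)) (Fin (L + 1)) ℂ)
    (hT : ∀ p q : Fin (L + 1), T p q = ∑ k, a k * u k ^ (((p : ℕ) : ℤ) - ((q : ℕ) : ℤ))) :
    T.rank = K := by
  have hKL : K ≤ L + 1 := hL.trans (Nat.le_succ L)
  set V : Matrix (Fin (L + 1)) (Fin K) ℂ := fun p k => u k ^ (p : ℕ) with hV
  set M : Matrix (Fin K) (Fin (L + 1)) ℂ := fun k q => a k * ((u k)⁻¹) ^ (q : ℕ) with hM
  have hTVM : T = V * M := by
    ext p q
    rw [hT, Matrix.mul_apply]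
    refine Finset.sum_congr rfl fun k _ => ?_
    have : u k ^ (((p : ℕ) : ℤ) - ((q : ℕ) : ℤ)) = u k ^ (p : ℕ) * ((u k)⁻¹) ^ (q : ℕ) := by
      rw [zpow_sub₀ (hu k), zpow_natCast, zpow_natCast, div_eq_mul_inv, inv_pow]
    rw [this, hV, hM]
    ring
  -- square submatrices
  have hdetS : ((vandermonde u)ᵀ).det ≠ 0 := by
    rw [Matrix.det_transpose, det_vandermonde_ne_zero_iff]
    exact hdist
  set N : Matrix (Fin K) (Fin K) ℂ := M.submatrix id (Fin.castLE hKL) with hN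
  have hNeq : N = diagonal a * vandermonde (fun k => (u k)⁻¹) := by
    ext k q
    simp [hN, hM, Matrix.diagonal_mul, vandermonde_apply, Matrix.submatrix]
  have hdetN : N.det ≠ 0 := by
    rw [hNeq, Matrix.det_mul, Matrix.det_diagonal]
    refine mul_ne_zero (Finset.prod_ne_zero_iff.mpr fun k _ => ha k) ?_
    rw [det_vandermonde_ne_zero_iff]
    exact fun i j h => hdist (inv_injective h)
  -- injectivity of V
  have hVinj : Function.Injective V.mulVecLin := by
    rw [← LinearMap.ker_eq_bot, LinearMap.ker_eq_bot']
    intro x hx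
    have hS : ((vandermonde u)ᵀ).mulVec x = 0 := by
      funext p
      have := congrFun hx (Fin.castLE hKL p)
      rw [Matrix.mulVecLin_apply] at this
      simpa [Matrix.mulVecLin_apply, Matrix.mulVec, dotProduct, hV,
        Matrix.transpose_apply, vandermonde_apply] using this
    have hinj : Function.Injective ((vandermonde u)ᵀ).mulVec :=
      Matrix.mulVec_injective_iff_isUnit.mpr ((Matrix.isUnit_iff_isUnit_det _).mpr hdetS.isUnit)
    exact hinj (show _ *ᵥ x = _ *ᵥ (0 : Fin K → ℂ) by rw [hS, Matrix.mulVec_zero])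
  -- surjectivity of M
  have hMsurj : Function.Surjective M.mulVecLin := by
    intro y
    have hNsurj : Function.Surjective N.mulVec :=
      Matrix.mulVec_surjective_iff_isUnit.mpr ((Matrix.isUnit_iff_isUnit_det _).mpr hdetN.isUnit)
    obtain ⟨x, hx⟩ := hNsurj y
    refine ⟨fun q => if h : (q : ℕ) < K then x ⟨q, h⟩ else 0, ?_⟩
    funext k
    have key : ∑ q : Fin (L + 1), M k q * (if h : (q : ℕ) < K then x ⟨q, h⟩ else 0)
        = ∑ q : Fin K, N k q * x q := by
      let emb : Fin K ↪ Fin (L + 1) := ⟨Fin.castLE hKL, Fin.castLE_injective hKL⟩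
      calc ∑ q : Fin (L + 1), M k q * (if h : (q : ℕ) < K then x ⟨q, h⟩ else 0)
          = ∑ q ∈ Finset.univ.map emb,
              M k q * (if h : (q : ℕ) < K then x ⟨q, h⟩ else 0) := by
            refine (Finset.sum_subset (Finset.subset_univ _) fun q _ hq => ?_).symm
            have : ¬ (q : ℕ) < K := by
              intro h
              exact hq (Finset.mem_map.mpr ⟨⟨q, h⟩, Finset.mem_univ _, by
                show Fin.castLE hKL _ = q
                simp [Fin.ext_iff]⟩)
            simp [this]
        _ = ∑ q : Fin K, M k (emb q) *
              (if h : ((emb q : Fin (L+1)) : ℕ) < K then x ⟨(emb q : Fin (L+1)), h⟩ else 0) :=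
            Finset.sum_map _ _ _
        _ = ∑ q : Fin K, N k q * x q := by
            refine Finset.sum_congr rfl fun q _ => ?_
            have hq : ((emb q : Fin (L+1)) : ℕ) < K := by
              show ((Fin.castLE hKL q : Fin (L+1)) : ℕ) < K
              simpa using q.isLt
            rw [dif_pos hq]
            show M k (Fin.castLE hKL q) * x _ = N k q * x q
            congr 1 <;> simp [hN, Fin.ext_iff]
    have hMv : M.mulVec (fun q => if h : (q : ℕ) < K then x ⟨q, h⟩ else 0) k
        = ∑ q : Fin K, N k q * x q := by
      simp only [Matrix.mulVec, dotProduct]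
      exact key
    rw [Matrix.mulVecLin_apply, hMv]
    have := congrFun hx k
    simpa [Matrix.mulVec, dotProduct] using this
  rw [hTVM, Matrix.rank, Matrix.mulVecLin_mul, LinearMap.range_comp,
    LinearMap.range_eq_top.mpr hMsurj, Submodule.map_top]
  rw [LinearMap.finrank_range_of_inj hVinj]
  simp
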